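/- Assume in addition that C is braided monoidal. Then for all objects x and y of C and every functor F in Fct(C, A) there is an exact sequence 0 → κ_x(F) → κ_{x⊗y}(F) → τ_x(κ_y(F)) → δ_x(F) → δ_{x⊗y}(F) → τ_x(δ_y(F)) → 0 in Fct(C, A), natural in F. It arises from the factorization of i_{x⊗y}(F) as the composite F → τ_x(F) → τ_y(τ_x(F)) ≅ τ_{x⊗y}(F) of i_x(F) followed by i_y(τ_x(F)), together with the kernel–cokernel six-term exact sequence of a composite and the commutation isomorphisms τ_x ∘ κ_y ≅ κ_y ∘ τ_x and τ_x ∘ δ_y ≅ δ_y ∘ τ_x. (This is the exact sequence (1.6) of the paper, up to interchanging the roles of x and y.) -/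

import Mathlib

open CategoryTheory CategoryTheory.Limits CategoryTheory.MonoidalCategory

section SixTermAbstract

open Preadditive

variable {D : Type*} [Category D] [Abelian D] {X Y Z : D}

private noncomputable def stα (f : X ⟶ Y) (g : Y ⟶ Z) : kernel f ⟶ kernel (f ≫ g) :=
  kernel.lift _ (kernel.ι f) (by rw [← Category.assoc, kernel.condition, zero_comp])

private noncomputable def stβ (f : X ⟶ Y) (g : Y ⟶ Z) : kernel (f ≫ g) ⟶ kernel g :=
  kernel.lift _ (kernel.ι (f ≫ g) ≫ f) (by rw [Category.assoc, kernel.condition])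

private noncomputable def stγ (f : X ⟶ Y) (g : Y ⟶ Z) : kernel g ⟶ cokernel f :=
  kernel.ι g ≫ cokernel.π f

private noncomputable def stε (f : X ⟶ Y) (g : Y ⟶ Z) : cokernel f ⟶ cokernel (f ≫ g) :=
  cokernel.desc _ (g ≫ cokernel.π (f ≫ g)) (by rw [← Category.assoc, cokernel.condition])

private noncomputable def stζ (f : X ⟶ Y) (g : Y ⟶ Z) : cokernel (f ≫ g) ⟶ cokernel g :=
  cokernel.desc _ (cokernel.π g) (by rw [Category.assoc, cokernel.condition, comp_zero])

variable (f : X ⟶ Y) (g : Y ⟶ Z)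

private lemma hstα : stα f g ≫ kernel.ι (f ≫ g) = kernel.ι f := kernel.lift_ι _ _ _
private lemma hstβ : stβ f g ≫ kernel.ι g = kernel.ι (f ≫ g) ≫ f := kernel.lift_ι _ _ _
private lemma hstε : cokernel.π f ≫ stε f g = g ≫ cokernel.π (f ≫ g) := cokernel.π_desc _ _ _
private lemma hstζ : cokernel.π (f ≫ g) ≫ stζ f g = cokernel.π g := cokernel.π_desc _ _ _

private lemma stw₁ : stα f g ≫ stβ f g = 0 := by
  rw [← cancel_mono (kernel.ι g)]
  simp [hstβ, reassoc_of% (hstα f g), kernel.condition]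

private lemma stw₂ : stβ f g ≫ stγ f g = 0 := by
  simp only [stγ, ← Category.assoc, hstβ]
  rw [Category.assoc, cokernel.condition, comp_zero]

private lemma stw₃ : stγ f g ≫ stε f g = 0 := by
  simp only [stγ, Category.assoc, hstε]
  rw [← Category.assoc, kernel.condition, zero_comp]

private lemma stw₄ : stε f g ≫ stζ f g = 0 := by
  rw [← cancel_epi (cokernel.π f), reassoc_of% (hstε f g), hstζ, cokernel.condition, comp_zero]

private lemma stex₁ : (ShortComplex.mk _ _ (stw₁ f g)).Exact := by
  rw [ShortComplex.exact_iff_exact_up_to_refinements]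
  intro T t ht
  dsimp at ht
  have h1 : t ≫ stβ f g ≫ kernel.ι g = 0 := by rw [← Category.assoc, ht, zero_comp]
  rw [hstβ] at h1
  refine ⟨T, 𝟙 T, inferInstance,
    kernel.lift f (t ≫ kernel.ι (f ≫ g)) (by simpa [Category.assoc] using h1), ?_⟩
  rw [Category.id_comp, ← cancel_mono (kernel.ι (f ≫ g))]
  dsimp
  rw [Category.assoc, hstα, kernel.lift_ι]

private lemma stex₂ : (ShortComplex.mk _ _ (stw₂ f g)).Exact := by
  rw [ShortComplex.exact_iff_exact_up_to_refinements]
  intro T t ht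
  dsimp at ht
  obtain ⟨T', π, hπ, a, ha⟩ := (ShortComplex.exact_cokernel f).exact_up_to_refinements
    (t ≫ kernel.ι g) (by rw [Category.assoc]; exact ht)
  dsimp at a ha
  have hcond : a ≫ f ≫ g = 0 := by
    have h2 : (a ≫ f) ≫ g = 0 := by
      rw [← ha, Category.assoc, Category.assoc, kernel.condition, comp_zero, comp_zero]
    simpa [Category.assoc] using h2
  refine ⟨T', π, hπ, kernel.lift (f ≫ g) a hcond, ?_⟩
  dsimp
  rw [← cancel_mono (kernel.ι g), Category.assoc, Category.assoc, hstβ,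
    kernel.lift_ι_assoc]
  exact ha

private lemma stex₃ : (ShortComplex.mk _ _ (stw₃ f g)).Exact := by
  rw [ShortComplex.exact_iff_exact_up_to_refinements]
  intro T t ht
  dsimp at ht
  obtain ⟨T', p, hp, u, hu⟩ := surjective_up_to_refinements_of_epi (cokernel.π f) t
  have hu' : (u ≫ g) ≫ cokernel.π (f ≫ g) = 0 := by
    calc (u ≫ g) ≫ cokernel.π (f ≫ g) = u ≫ cokernel.π f ≫ stε f g := by
          rw [hstε, Category.assoc]
        _ = (p ≫ t) ≫ stε f g := by rw [hu, Category.assoc]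
        _ = 0 := by rw [Category.assoc, ht, comp_zero]
  obtain ⟨T'', q, hq, a, ha⟩ := (ShortComplex.exact_cokernel (f ≫ g)).exact_up_to_refinements
    (u ≫ g) hu'
  dsimp at a ha
  have hker : (q ≫ u - a ≫ f) ≫ g = 0 := by
    rw [sub_comp, Category.assoc, Category.assoc, ← ha, sub_self]
  refine ⟨T'', q ≫ p, epi_comp _ _, kernel.lift g (q ≫ u - a ≫ f) hker, ?_⟩
  show (q ≫ p) ≫ t = _ ≫ (kernel.ι g ≫ cokernel.π f)
  rw [← Category.assoc (kernel.lift g _ _), kernel.lift_ι, sub_comp,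
    Category.assoc a f, cokernel.condition, comp_zero, sub_zero,
    Category.assoc, Category.assoc, ← hu, ← Category.assoc]

private lemma stex₄ : (ShortComplex.mk _ _ (stw₄ f g)).Exact := by
  rw [ShortComplex.exact_iff_exact_up_to_refinements]
  intro T t ht
  dsimp at ht
  obtain ⟨T', p, hp, u, hu⟩ := surjective_up_to_refinements_of_epi (cokernel.π (f ≫ g)) t
  have hu' : u ≫ cokernel.π g = 0 := by
    rw [← hstζ, ← Category.assoc, ← hu, Category.assoc, ht, comp_zero]
  obtain ⟨T'', q, hq, b, hb⟩ := (ShortComplex.exact_cokernel g).exact_up_to_refinements u hu'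
  dsimp at b hb
  refine ⟨T'', q ≫ p, epi_comp _ _, b ≫ cokernel.π f, ?_⟩
  dsimp
  rw [Category.assoc, hu, ← Category.assoc q, hb, Category.assoc, ← hstε, ← Category.assoc]

theorem six_term_of_comp {K₁ K₂ K₃ Q₁ Q₂ Q₃ : D}
    (e₁ : K₁ ≅ kernel f) (e₂ : K₂ ≅ kernel (f ≫ g)) (e₃ : K₃ ≅ kernel g)
    (e₄ : Q₁ ≅ cokernel f) (e₅ : Q₂ ≅ cokernel (f ≫ g)) (e₆ : Q₃ ≅ cokernel g) :
    ∃ (α : K₁ ⟶ K₂) (β : K₂ ⟶ K₃) (γ : K₃ ⟶ Q₁) (ε : Q₁ ⟶ Q₂) (ζ : Q₂ ⟶ Q₃)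
      (w₁ : α ≫ β = 0) (w₂ : β ≫ γ = 0) (w₃ : γ ≫ ε = 0) (w₄ : ε ≫ ζ = 0),
      Mono α ∧
      (ShortComplex.mk α β w₁).Exact ∧
      (ShortComplex.mk β γ w₂).Exact ∧
      (ShortComplex.mk γ ε w₃).Exact ∧
      (ShortComplex.mk ε ζ w₄).Exact ∧
      Epi ζ := by
  have monoα₀ : Mono (stα f g) := mono_of_mono_fac (hstα f g)
  have epiζ₀ : Epi (stζ f g) := epi_of_epi_fac (hstζ f g)
  refine ⟨e₁.hom ≫ stα f g ≫ e₂.inv, e₂.hom ≫ stβ f g ≫ e₃.inv, e₃.hom ≫ stγ f g ≫ e₄.inv,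
    e₄.hom ≫ stε f g ≫ e₅.inv, e₅.hom ≫ stζ f g ≫ e₆.inv, ?_, ?_, ?_, ?_, ?_, ?_, ?_, ?_, ?_, ?_⟩
  · simp [reassoc_of% (stw₁ f g)]
  · simp [reassoc_of% (stw₂ f g)]
  · simp [reassoc_of% (stw₃ f g)]
  · simp [reassoc_of% (stw₄ f g)]
  · exact mono_comp _ _
  · exact (ShortComplex.exact_iff_of_iso
      (ShortComplex.isoMk e₁.symm e₂.symm e₃.symm (by simp) (by simp))).1 (stex₁ f g)
  · exact (ShortComplex.exact_iff_of_iso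
      (ShortComplex.isoMk e₂.symm e₃.symm e₄.symm (by simp) (by simp))).1 (stex₂ f g)
  · exact (ShortComplex.exact_iff_of_iso
      (ShortComplex.isoMk e₃.symm e₄.symm e₅.symm (by simp) (by simp))).1 (stex₃ f g)
  · exact (ShortComplex.exact_iff_of_iso
      (ShortComplex.isoMk e₄.symm e₅.symm e₆.symm (by simp) (by simp))).1 (stex₄ f g)
  · exact epi_comp _ _

end SixTermAbstract

variable {C : Type*} [Category C] [MonoidalCategory C]
variable {A : Type*} [Category A] [Abelian A]

/-- The translation endofunctor `τ_x` of `Fct(C, A)`: precomposition with `x ⊗ -`. -/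
noncomputable def tauF (A : Type*) [Category A] (x : C) : (C ⥤ A) ⥤ (C ⥤ A) :=
  (Functor.whiskeringLeft C C A).obj (tensorLeft x)

/-- The component `i_x(F) : F ⟶ τ_x F`, whose component at `c` is
`F` applied to `c ≅ 𝟙 ⊗ c ⟶ x ⊗ c`. -/
def iApp (hI : IsInitial (𝟙_ C)) (x : C) (F : C ⥤ A) : F ⟶ tensorLeft x ⋙ F where
  app c := F.map ((λ_ c).inv ≫ hI.to x ▷ c)
  naturality c c' f := by
    dsimp
    rw [← F.map_comp, ← F.map_comp]
    congr 1
    rw [leftUnitor_inv_naturality_assoc, whisker_exchange, Category.assoc]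

/-- The natural transformation `i_x : Id ⟶ τ_x` of endofunctors of `Fct(C, A)`. -/
noncomputable def iNT (hI : IsInitial (𝟙_ C)) (x : C) :
    𝟭 (C ⥤ A) ⟶ tauF A x where
  app F := iApp hI x F
  naturality F G η := by
    ext c
    exact (η.naturality _).symm

/-- The evanescence endofunctor `κ_x = ker(i_x)` of `Fct(C, A)`. -/
noncomputable def kappaF (hI : IsInitial (𝟙_ C)) (x : C) : (C ⥤ A) ⥤ (C ⥤ A) :=
  kernel (iNT (A := A) hI x)

/-- The difference endofunctor `δ_x = coker(i_x)` of `Fct(C, A)`. -/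
noncomputable def deltaF (hI : IsInitial (𝟙_ C)) (x : C) : (C ⥤ A) ⥤ (C ⥤ A) :=
  cokernel (iNT (A := A) hI x)

/-- The natural transformation `tensorLeft x ⟶ tensorLeft (x ⊗ y)` inserting `y`. -/
def thetaNT (hI : IsInitial (𝟙_ C)) (x y : C) : tensorLeft x ⟶ tensorLeft (x ⊗ y) where
  app c := x ◁ ((λ_ c).inv ≫ hI.to y ▷ c) ≫ (α_ x y c).inv
  naturality c c' h := by
    dsimp
    rw [← MonoidalCategory.whiskerLeft_comp_assoc, leftUnitor_inv_naturality_assoc,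
      whisker_exchange]
    simp only [MonoidalCategory.whiskerLeft_comp, Category.assoc,
      associator_inv_naturality_right]

/-- The morphism `g : τ_x ⟶ τ_{x⊗y}` through which `i_{x⊗y}` factors. -/
noncomputable def gNT (hI : IsInitial (𝟙_ C)) (x y : C) :
    tauF A x ⟶ tauF A (x ⊗ y) :=
  (Functor.whiskeringLeft C C A).map (thetaNT hI x y)

lemma key1 (hI : IsInitial (𝟙_ C)) (x y : C) (c : C) :
    ((λ_ c).inv ≫ hI.to x ▷ c) ≫ (x ◁ ((λ_ c).inv ≫ hI.to y ▷ c) ≫ (α_ x y c).inv) =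
    (λ_ c).inv ≫ hI.to (x ⊗ y) ▷ c := by
  have coh : (λ_ c).inv ≫ (𝟙_ C) ◁ (λ_ c).inv ≫ (α_ (𝟙_ C) (𝟙_ C) c).inv =
      (λ_ c).inv ≫ (λ_ (𝟙_ C)).inv ▷ c := by monoidal
  have h1 : (λ_ (𝟙_ C)).inv ≫ (𝟙_ C) ◁ hI.to y ≫ hI.to x ▷ y = hI.to (x ⊗ y) :=
    hI.hom_ext _ _
  simp only [Category.assoc]
  rw [← whisker_exchange_assoc, MonoidalCategory.whiskerLeft_comp_assoc,
    associator_inv_naturality_left, associator_inv_naturality_middle_assoc,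
    reassoc_of% coh, ← h1]
  simp only [comp_whiskerRight, Category.assoc]

lemma hcomp (hI : IsInitial (𝟙_ C)) (x y : C) :
    iNT (A := A) hI x ≫ gNT hI x y = iNT hI (x ⊗ y) := by
  ext F c
  dsimp [iNT, iApp, gNT, thetaNT, tauF]
  rw [← F.map_comp]
  congr 1
  exact key1 hI x y c

section Braided
variable [BraidedCategory C]

/-- `tensorLeft (x ⊗ y) ≅ tensorLeft x ⋙ tensorLeft y` via the braiding. -/
noncomputable def psiNT (x y : C) : tensorLeft (x ⊗ y) ≅ tensorLeft x ⋙ tensorLeft y :=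
  NatIso.ofComponents (fun c => whiskerRightIso (β_ x y) c ≪≫ α_ y x c)
    (by
      intro c c' h
      dsimp
      simp only [whiskerRightIso_hom]
      rw [whisker_exchange_assoc, Category.assoc, associator_naturality_right])

lemma key2 (hI : IsInitial (𝟙_ C)) (x y : C) (c : C) :
    (x ◁ ((λ_ c).inv ≫ hI.to y ▷ c) ≫ (α_ x y c).inv) ≫
      ((β_ x y).hom ▷ c ≫ (α_ y x c).hom) =
    (λ_ (x ⊗ c)).inv ≫ hI.to y ▷ (x ⊗ c) := by
  have coh : x ◁ (λ_ c).inv ≫ (α_ x (𝟙_ C) c).inv ≫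
      (((ρ_ x).hom ≫ (λ_ x).inv) ▷ c) ≫ (α_ (𝟙_ C) x c).hom = (λ_ (x ⊗ c)).inv := by
    monoidal
  simp only [MonoidalCategory.whiskerLeft_comp, Category.assoc]
  rw [associator_inv_naturality_middle_assoc, ← comp_whiskerRight_assoc,
    BraidedCategory.braiding_naturality_right, comp_whiskerRight_assoc,
    associator_naturality_left, braiding_tensorUnit_right, reassoc_of% coh]

lemma sqlem (hI : IsInitial (𝟙_ C)) (x y : C) :
    gNT (A := A) hI x y ≫ ((Functor.whiskeringLeft C C A).mapIso (psiNT x y)).hom =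
    (Functor.leftUnitor (tauF A x)).inv ≫
      ((Functor.whiskeringRight (C ⥤ A) (C ⥤ A) (C ⥤ A)).obj (tauF A x)).map (iNT hI y) := by
  ext F c
  dsimp [gNT, thetaNT, psiNT, tauF, iNT, iApp]
  rw [Category.id_comp, ← F.map_comp]
  congr 1
  exact key2 hI x y c

end Braided

theorem kappa_delta_six_term [BraidedCategory C] (hI : IsInitial (𝟙_ C)) (x y : C) :
    ∃ (α : kappaF (A := A) hI x ⟶ kappaF hI (x ⊗ y))
      (β : kappaF hI (x ⊗ y) ⟶ kappaF hI y ⋙ tauF A x)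
      (γ : kappaF hI y ⋙ tauF A x ⟶ deltaF hI x)
      (ε : deltaF hI x ⟶ deltaF hI (x ⊗ y))
      (ζ : deltaF hI (x ⊗ y) ⟶ deltaF hI y ⋙ tauF A x)
      (w₁ : α ≫ β = 0) (w₂ : β ≫ γ = 0) (w₃ : γ ≫ ε = 0) (w₄ : ε ≫ ζ = 0),
      Mono α ∧
      (ShortComplex.mk α β w₁).Exact ∧
      (ShortComplex.mk β γ w₂).Exact ∧
      (ShortComplex.mk γ ε w₃).Exact ∧
      (ShortComplex.mk ε ζ w₄).Exact ∧
      Epi ζ := by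
  have hc : iNT (A := A) hI x ≫ gNT hI x y = iNT hI (x ⊗ y) := hcomp hI x y
  haveI i1 : PreservesLimitsOfShape WalkingParallelPair (tauF A x) :=
    inferInstanceAs (PreservesLimitsOfShape WalkingParallelPair
      ((Functor.whiskeringLeft C C A).obj (tensorLeft x)))
  haveI i2 : PreservesColimitsOfShape WalkingParallelPair (tauF A x) :=
    inferInstanceAs (PreservesColimitsOfShape WalkingParallelPair
      ((Functor.whiskeringLeft C C A).obj (tensorLeft x)))
  let T := (Functor.whiskeringRight (C ⥤ A) (C ⥤ A) (C ⥤ A)).obj (tauF A x)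
  haveI i3 : PreservesLimitsOfShape WalkingParallelPair T :=
    inferInstanceAs (PreservesLimitsOfShape WalkingParallelPair
      ((Functor.whiskeringRight (C ⥤ A) (C ⥤ A) (C ⥤ A)).obj (tauF A x)))
  haveI i4 : PreservesColimitsOfShape WalkingParallelPair T :=
    inferInstanceAs (PreservesColimitsOfShape WalkingParallelPair
      ((Functor.whiskeringRight (C ⥤ A) (C ⥤ A) (C ⥤ A)).obj (tauF A x)))
  haveI i5 : Functor.PreservesZeroMorphisms T := ⟨fun G H => by
    ext F c
    simp [T, tauF]
    rfl⟩
  let e₃ : (kappaF hI y ⋙ tauF A x) ≅ kernel (gNT (A := A) hI x y) :=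
    ((PreservesKernel.iso T (iNT hI y) :
        (kappaF hI y ⋙ tauF A x) ≅ kernel (T.map (iNT hI y)))) ≪≫
      (kernel.mapIso (gNT (A := A) hI x y) (T.map (iNT hI y))
        (Functor.leftUnitor (tauF A x)).symm
        ((Functor.whiskeringLeft C C A).mapIso (psiNT x y)) (sqlem (A := A) hI x y)).symm
  let e₆ : (deltaF hI y ⋙ tauF A x) ≅ cokernel (gNT (A := A) hI x y) :=
    ((PreservesCokernel.iso T (iNT hI y) :
        (deltaF hI y ⋙ tauF A x) ≅ cokernel (T.map (iNT hI y)))) ≪≫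
      (cokernel.mapIso (gNT (A := A) hI x y) (T.map (iNT hI y))
        (Functor.leftUnitor (tauF A x)).symm
        ((Functor.whiskeringLeft C C A).mapIso (psiNT x y)) (sqlem (A := A) hI x y)).symm
  exact six_term_of_comp (iNT hI x) (gNT hI x y) (Iso.refl _) (kernelIsoOfEq hc.symm) e₃
    (Iso.refl _) (cokernelIsoOfEq hc.symm) e₆
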